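/- Let d ≥ 2, let u : ℝ^d → ℝ be twice continuously differentiable and φ : ℝ^d → ℝ continuously differentiable near a point x ∈ ℝ^d, and suppose Δu(x) = Σ_{i=1}^d ∂²u/∂x_i²(x) = 0. Let v = φ∇u. Then at the point x: (div v)² − Σ_{i,j=1}^d (∂v_i/∂x_j)(∂v_j/∂x_i) ≤ |∇u(x)|² |∇φ(x)|². -/

import Mathlib

open MeasureTheory Real
open scoped RealInnerProductSpace

/-- The partial derivative `∂f/∂x_i` of a scalar function on `ℝ^d`. -/
noncomputable def pderiv' (d : ℕ) (f : EuclideanSpace ℝ (Fin d) → ℝ) (i : Fin d)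
    (x : EuclideanSpace ℝ (Fin d)) : ℝ :=
  fderiv ℝ f x (EuclideanSpace.single i 1)

theorem stmt3
    (d : ℕ) (hd : 2 ≤ d)
    (u φ : EuclideanSpace ℝ (Fin d) → ℝ) (x : EuclideanSpace ℝ (Fin d))
    (hu : ContDiffAt ℝ 2 u x) (hφ : ContDiffAt ℝ 1 φ x)
    (hharm : ∑ i, pderiv' d (pderiv' d u i) i x = 0)
    (v : EuclideanSpace ℝ (Fin d) → EuclideanSpace ℝ (Fin d))
    (hv : v = fun y => φ y • gradient u y) :
    (∑ i, pderiv' d (fun y => v y i) i x) ^ 2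
      - ∑ i, ∑ j, pderiv' d (fun y => v y i) j x * pderiv' d (fun y => v y j) i x
      ≤ ‖gradient u x‖ ^ 2 * ‖gradient φ x‖ ^ 2 := by
  classical
  -- components of gradient are partial derivatives
  have hgrad : ∀ (f : EuclideanSpace ℝ (Fin d) → ℝ) (y : EuclideanSpace ℝ (Fin d)) (i : Fin d),
      gradient f y i = fderiv ℝ f y (EuclideanSpace.single i 1) := by
    intro f y i
    have h1 : ⟪gradient f y, EuclideanSpace.single i (1:ℝ)⟫
        = fderiv ℝ f y (EuclideanSpace.single i 1) := by
      rw [gradient]; exact InnerProductSpace.toDual_symm_apply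
    rw [EuclideanSpace.inner_single_right] at h1
    simpa using h1
  have hu1 : DifferentiableAt ℝ u x := hu.differentiableAt (by norm_num)
  have hφ1 : DifferentiableAt ℝ φ x := hφ.differentiableAt one_ne_zero
  have hfd : ContDiffAt ℝ 1 (fderiv ℝ u) x := hu.fderiv_right (by norm_num)
  have hfd1 : DifferentiableAt ℝ (fderiv ℝ u) x := hfd.differentiableAt one_ne_zero
  set U : Fin d → ℝ := fun i => fderiv ℝ u x (EuclideanSpace.single i 1) with hUdef
  set P : Fin d → ℝ := fun i => fderiv ℝ φ x (EuclideanSpace.single i 1) with hPdef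
  set A : Fin d → Fin d → ℝ := fun i j =>
    fderiv ℝ (fderiv ℝ u) x (EuclideanSpace.single j 1) (EuclideanSpace.single i 1) with hAdef
  have hg : ∀ i : Fin d,
      DifferentiableAt ℝ (fun y => fderiv ℝ u y (EuclideanSpace.single i 1)) x :=
    fun i => hfd1.clm_apply (differentiableAt_const _)
  have hAeq : ∀ i j, pderiv' d (pderiv' d u i) j x = A i j := by
    intro i j
    show fderiv ℝ (fun y => fderiv ℝ u y (EuclideanSpace.single i 1)) x
        (EuclideanSpace.single j 1) = A i j
    rw [fderiv_clm_apply hfd1 (differentiableAt_const _)]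
    simp [hAdef]
  have hsym : ∀ i j, A i j = A j i := fun i j =>
    (hu.isSymmSndFDerivAt (by norm_num)) _ _
  -- the entries of the Jacobian of v
  have hB : ∀ i j, pderiv' d (fun y => v y i) j x = φ x * A i j + U i * P j := by
    intro i j
    have hfun : (fun y => v y i)
        = fun y => φ y * (fderiv ℝ u y (EuclideanSpace.single i 1)) := by
      funext y
      rw [hv]
      simp only [PiLp.smul_apply, smul_eq_mul, hgrad u y i]
    show fderiv ℝ (fun y => v y i) x (EuclideanSpace.single j 1) = _
    rw [hfun, fderiv_fun_mul hφ1 (hg i)]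
    rw [ContinuousLinearMap.add_apply, ContinuousLinearMap.smul_apply,
      ContinuousLinearMap.smul_apply, fderiv_clm_apply hfd1 (differentiableAt_const _)]
    simp [hAdef, hUdef, hPdef, mul_comm]
  -- harmonicity in terms of A
  have hharm' : ∑ i, A i i = 0 := by
    rw [← hharm]; exact Finset.sum_congr rfl fun i _ => (hAeq i i).symm
  -- norms
  have hnormu : ‖gradient u x‖ ^ 2 = ∑ i, U i ^ 2 := by
    rw [EuclideanSpace.norm_eq, Real.sq_sqrt (Finset.sum_nonneg fun i _ => sq_nonneg _)]
    exact Finset.sum_congr rfl fun i _ => by rw [hgrad u x i, Real.norm_eq_abs, sq_abs]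
  have hnormφ : ‖gradient φ x‖ ^ 2 = ∑ i, P i ^ 2 := by
    rw [EuclideanSpace.norm_eq, Real.sq_sqrt (Finset.sum_nonneg fun i _ => sq_nonneg _)]
    exact Finset.sum_congr rfl fun i _ => by rw [hgrad φ x i, Real.norm_eq_abs, sq_abs]
  -- rewrite the goal
  have hgoal1 : ∑ i, pderiv' d (fun y => v y i) i x = ∑ i, U i * P i := by
    rw [show ∑ i, pderiv' d (fun y => v y i) i x = ∑ i, (φ x * A i i + U i * P i) from
      Finset.sum_congr rfl fun i _ => hB i i]
    rw [Finset.sum_add_distrib, ← Finset.mul_sum, hharm', mul_zero, zero_add]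
  have hgoal2 : ∑ i, ∑ j, pderiv' d (fun y => v y i) j x * pderiv' d (fun y => v y j) i x
      = ∑ i, ∑ j, (φ x * A i j + U i * P j) * (φ x * A i j + U j * P i) := by
    refine Finset.sum_congr rfl fun i _ => Finset.sum_congr rfl fun j _ => ?_
    rw [hB i j, hB j i, hsym j i]
  rw [hgoal1, hgoal2, hnormu, hnormφ]
  -- pure algebra from now on
  set S0 : ℝ := ∑ i, ∑ j, (U i * P i) * (U j * P j) with hS0
  set S1 : ℝ := ∑ i, ∑ j, (φ x * A i j + U i * P j) * (φ x * A i j + U j * P i) with hS1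
  set S2 : ℝ := ∑ i, ∑ j, (φ x * A i j + U i * P j) ^ 2 with hS2
  set S3 : ℝ := ∑ i, ∑ j, A i j * (U j * P i) with hS3
  set S4 : ℝ := ∑ i, ∑ j, A i j * (U i * P j) with hS4
  set S5 : ℝ := ∑ i, ∑ j, U i ^ 2 * P j ^ 2 with hS5
  have f0 : (∑ i, U i * P i) ^ 2 = S0 := by
    rw [sq, Finset.sum_mul_sum, hS0]
  have f5 : (∑ i, U i ^ 2) * (∑ i, P i ^ 2) = S5 := by
    rw [Finset.sum_mul_sum, hS5]
  have f34 : S3 = S4 := by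
    rw [hS3, hS4, Finset.sum_comm]
    exact Finset.sum_congr rfl fun i _ => Finset.sum_congr rfl fun j _ => by
      rw [hsym j i]
  have f2 : 0 ≤ S2 :=
    Finset.sum_nonneg fun i _ => Finset.sum_nonneg fun j _ => sq_nonneg _
  have fcomb : S5 = S0 - S1 + S2 + φ x * S3 - φ x * S4 := by
    rw [hS0, hS1, hS2, hS3, hS4, hS5]
    simp only [Finset.mul_sum]
    rw [← Finset.sum_sub_distrib, ← Finset.sum_add_distrib, ← Finset.sum_add_distrib,
      ← Finset.sum_sub_distrib]
    refine Finset.sum_congr rfl fun i _ => ?_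
    rw [← Finset.sum_sub_distrib, ← Finset.sum_add_distrib, ← Finset.sum_add_distrib,
      ← Finset.sum_sub_distrib]
    exact Finset.sum_congr rfl fun j _ => by ring
  have hmul : φ x * S3 = φ x * S4 := by rw [f34]
  linarith [f0, f5, f2, fcomb, hmul]
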